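/- Let Γ be a countable LERF group, i.e. every finitely generated subgroup of Γ is an intersection of finite index subgroups. Then Boom(Γ) is residual (comeagre) in Sub(Γ): it contains a dense G_δ subset of Sub(Γ) with respect to the Chabauty topology. -/

import Mathlib

/-- The conjugation action of `γ` on subgroups: `Δ ↦ γ Δ γ⁻¹`. -/
def conjSubgroup {Γ : Type*} [Group Γ] (γ : Γ) (Δ : Subgroup Γ) : Subgroup Γ :=
  Subgroup.map (MulAut.conj γ).toMonoidHom Δ

/-- The Chabauty topology on `Subgroup Γ`: induced from the product of discrete
topologies on `Γ → Prop` via the membership indicator. -/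
def chabautyTopology (Γ : Type*) [Group Γ] : TopologicalSpace (Subgroup Γ) :=
  TopologicalSpace.induced (fun (Δ : Subgroup Γ) (g : Γ) => g ∈ Δ)
    (@Pi.topologicalSpace Γ (fun _ => Prop) (fun _ => ⊥))

/-- `γ` is a recurrent direction for `Δ`: every Chabauty-open neighbourhood `O` of `Δ`
contains `γ^n Δ γ^{-n}` for some `n ≥ 1`. -/
def IsRecurrentDirection {Γ : Type*} [Group Γ] (γ : Γ) (Δ : Subgroup Γ) : Prop :=
  ∀ O : Set (Subgroup Γ), (chabautyTopology Γ).IsOpen O → Δ ∈ O →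
    ∃ n : ℕ, 1 ≤ n ∧ conjSubgroup (γ ^ n) Δ ∈ O

/-- `Δ` is a boomerang subgroup if every `γ` is a recurrent direction for it. -/
def IsBoomerang {Γ : Type*} [Group Γ] (Δ : Subgroup Γ) : Prop :=
  ∀ γ : Γ, IsRecurrentDirection γ Δ

namespace BoomerangAux

variable {Γ : Type*} [Group Γ]

lemma mem_conjSubgroup {g x : Γ} {Δ : Subgroup Γ} :
    x ∈ conjSubgroup g Δ ↔ g⁻¹ * x * g ∈ Δ := by
  simp only [conjSubgroup, Subgroup.mem_map, MulEquiv.coe_toMonoidHom, MulAut.conj_apply]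
  constructor
  · rintro ⟨y, hy, rfl⟩
    simpa [mul_assoc] using hy
  · intro h
    exact ⟨g⁻¹ * x * g, h, by simp [mul_assoc]⟩

lemma conjSubgroup_eq_self_of_mem {g : Γ} {Δ : Subgroup Γ} (hg : g ∈ Δ) :
    conjSubgroup g Δ = Δ := by
  ext x
  rw [mem_conjSubgroup]
  constructor
  · intro h
    have := Δ.mul_mem (Δ.mul_mem hg h) (Δ.inv_mem hg)
    simpa [mul_assoc] using this
  · intro h
    exact Δ.mul_mem (Δ.mul_mem (Δ.inv_mem hg) h) hg

/-- Cylinder sets are Chabauty-open. -/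
lemma isOpen_cyl (I : Finset Γ) (C : Γ → Set Prop) :
    (chabautyTopology Γ).IsOpen {Δ : Subgroup Γ | ∀ i ∈ I, (i ∈ Δ : Prop) ∈ C i} := by
  refine ⟨{f : Γ → Prop | ∀ i ∈ I, f i ∈ C i}, ?_, rfl⟩
  refine (@isOpen_pi_iff Γ (fun _ => Prop) (fun _ => ⊥) _).mpr ?_
  intro f hf
  exact ⟨I, C, fun a ha => ⟨@isOpen_discrete Prop ⊥ (@DiscreteTopology.mk Prop ⊥ rfl) (C a), hf a ha⟩,
    fun g hg i hi => hg i hi⟩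

lemma isOpen_single (i : Γ) (S : Set Prop) :
    (chabautyTopology Γ).IsOpen {Δ : Subgroup Γ | (i ∈ Δ : Prop) ∈ S} := by
  have h := isOpen_cyl ({i} : Finset Γ) (fun _ => S)
  have e : {Δ : Subgroup Γ | ∀ j ∈ ({i} : Finset Γ), (j ∈ Δ : Prop) ∈ S}
      = {Δ : Subgroup Γ | (i ∈ Δ : Prop) ∈ S} := by
    ext Δ; simp
  rwa [e] at h

/-- Basic open sets of the Chabauty topology. -/
def U (P N : Finset Γ) : Set (Subgroup Γ) :=
  {Δ | (∀ p ∈ P, p ∈ Δ) ∧ ∀ ν ∈ N, ν ∉ Δ}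

lemma isOpen_U (P N : Finset Γ) : (chabautyTopology Γ).IsOpen (U P N) := by
  classical
  have h := isOpen_cyl (P ∪ N) (fun i => {p : Prop | (i ∈ P → p) ∧ (i ∈ N → ¬ p)})
  have e : {Δ : Subgroup Γ | ∀ i ∈ P ∪ N,
      (i ∈ Δ : Prop) ∈ {p : Prop | (i ∈ P → p) ∧ (i ∈ N → ¬ p)}} = U P N := by
    ext Δ
    simp only [Set.mem_setOf_eq, Finset.mem_union, U]
    constructor
    · intro h
      exact ⟨fun p hp => (h p (Or.inl hp)).1 hp, fun ν hν => (h ν (Or.inr hν)).2 hν⟩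
    · rintro ⟨h1, h2⟩ i hi
      exact ⟨fun hp => h1 i hp, fun hn => h2 i hn⟩
  rwa [e] at h

lemma isOpen_compl_U (P N : Finset Γ) : (chabautyTopology Γ).IsOpen (U P N)ᶜ := by
  classical
  letI := chabautyTopology Γ
  have e : (U P N)ᶜ = ⋃ i ∈ P ∪ N,
      {Δ : Subgroup Γ | (i ∈ Δ : Prop) ∈ {p : Prop | ¬ ((i ∈ P → p) ∧ (i ∈ N → ¬ p))}} := by
    ext Δ
    simp only [U, Set.mem_compl_iff, Set.mem_setOf_eq, Set.mem_iUnion, Finset.mem_union,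
      exists_prop]
    constructor
    · intro h
      rcases not_and_or.mp h with h1 | h2
      · obtain ⟨p, hp⟩ := not_forall.mp h1
        obtain ⟨hpP, hpΔ⟩ := Classical.not_imp.mp hp
        exact ⟨p, Or.inl hpP, fun hc => hpΔ (hc.1 hpP)⟩
      · obtain ⟨ν, hν⟩ := not_forall.mp h2
        obtain ⟨hνN, hνΔ⟩ := Classical.not_imp.mp hν
        exact ⟨ν, Or.inr hνN, fun hc => (hc.2 hνN) (not_not.mp hνΔ)⟩
    · rintro ⟨i, hi, hcon⟩ hU
      rcases hi with hiP | hiN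
      · exact hcon ⟨fun _ => hU.1 i hiP, fun hn => hU.2 i hn⟩
      · exact hcon ⟨fun hp => hU.1 i hp, fun _ => hU.2 i hiN⟩
  rw [e]
  exact isOpen_biUnion fun i _ => isOpen_single i _

lemma exists_basic {O : Set (Subgroup Γ)} {Δ : Subgroup Γ}
    (hO : (chabautyTopology Γ).IsOpen O) (hΔ : Δ ∈ O) :
    ∃ P N : Finset Γ, Δ ∈ U P N ∧ U P N ⊆ O := by
  classical
  obtain ⟨t, ht, rfl⟩ := hO
  obtain ⟨I, u, hIu, hsub⟩ :=
    (@isOpen_pi_iff Γ (fun _ => Prop) (fun _ => ⊥) t).mp ht _ hΔ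
  refine ⟨I.filter (· ∈ Δ), I.filter (· ∉ Δ), ⟨?_, ?_⟩, ?_⟩
  · intro p hp
    exact (Finset.mem_filter.mp hp).2
  · intro ν hν
    exact (Finset.mem_filter.mp hν).2
  · intro Δ' hΔ'
    show (fun g => g ∈ Δ') ∈ t
    apply hsub
    intro i hi
    have hi' : i ∈ I := hi
    have hui := (hIu i hi').2
    have hee : (i ∈ Δ' : Prop) = (i ∈ Δ : Prop) := by
      by_cases h : i ∈ Δ
      · exact propext (iff_of_true (hΔ'.1 i (Finset.mem_filter.mpr ⟨hi', h⟩)) h)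
      · exact propext (iff_of_false (hΔ'.2 i (Finset.mem_filter.mpr ⟨hi', h⟩)) h)
    show (i ∈ Δ' : Prop) ∈ u i
    rw [hee]
    exact hui

lemma conj_mem_U_iff [DecidableEq Γ] {g : Γ} {Δ : Subgroup Γ} {P N : Finset Γ} :
    conjSubgroup g Δ ∈ U P N ↔
      Δ ∈ U (P.image fun x => g⁻¹ * x * g) (N.image fun x => g⁻¹ * x * g) := by
  simp [U, mem_conjSubgroup, Finset.forall_mem_image]

lemma isOpen_conj_preimage (g : Γ) (P N : Finset Γ) :
    (chabautyTopology Γ).IsOpen {Δ : Subgroup Γ | conjSubgroup g Δ ∈ U P N} := by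
  classical
  have e : {Δ : Subgroup Γ | conjSubgroup g Δ ∈ U P N}
      = U (P.image fun x => g⁻¹ * x * g) (N.image fun x => g⁻¹ * x * g) :=
    Set.ext fun Δ => conj_mem_U_iff
  rw [e]
  exact isOpen_U _ _

/-- The recurrence condition for direction `γ` relative to the basic open set `U P N`. -/
def W (γ : Γ) (P N : Finset Γ) : Set (Subgroup Γ) :=
  {Δ | Δ ∈ U P N → ∃ n : ℕ, 1 ≤ n ∧ conjSubgroup (γ ^ n) Δ ∈ U P N}

lemma isOpen_W (γ : Γ) (P N : Finset Γ) : (chabautyTopology Γ).IsOpen (W γ P N) := by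
  classical
  letI := chabautyTopology Γ
  have e : W γ P N = (U P N)ᶜ ∪ ⋃ (n : ℕ) (_ : 1 ≤ n),
      {Δ : Subgroup Γ | conjSubgroup (γ ^ n) Δ ∈ U P N} := by
    ext Δ
    simp only [W, Set.mem_setOf_eq, Set.mem_union, Set.mem_compl_iff, Set.mem_iUnion,
      exists_prop]
    tauto
  rw [e]
  exact IsOpen.union (isOpen_compl_U P N)
    (isOpen_iUnion fun n => isOpen_iUnion fun _ => isOpen_conj_preimage _ _ _)

lemma finiteIndex_mem_W {K : Subgroup Γ} (hK : K.FiniteIndex) (γ : Γ) (P N : Finset Γ) :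
    K ∈ W γ P N := by
  intro hKU
  obtain ⟨n, hn, -, hmem⟩ := Subgroup.exists_pow_mem_of_index_ne_zero hK.index_ne_zero γ
  exact ⟨n, hn, by rwa [conjSubgroup_eq_self_of_mem hmem]⟩

lemma exists_finiteIndex_mem_U
    (hLERF : ∀ H : Subgroup Γ, H.FG →
      H = sInf {K : Subgroup Γ | H ≤ K ∧ K.FiniteIndex})
    {P N : Finset Γ} {Δ : Subgroup Γ} (hΔ : Δ ∈ U P N) :
    ∃ K : Subgroup Γ, K ∈ U P N ∧ K.FiniteIndex := by
  classical
  set H : Subgroup Γ := Subgroup.closure (↑P : Set Γ) with hH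
  have hHfg : H.FG := ⟨P, rfl⟩
  have hHΔ : H ≤ Δ := (Subgroup.closure_le Δ).mpr fun p hp => hΔ.1 p hp
  have hsel : ∀ ν : Γ, ∃ K : Subgroup Γ, H ≤ K ∧ K.FiniteIndex ∧ (ν ∈ N → ν ∉ K) := by
    intro ν
    by_cases hν : ν ∈ N
    · have hνH : ν ∉ H := fun h => hΔ.2 ν hν (hHΔ h)
      have hν' : ¬ ∀ K ∈ {K : Subgroup Γ | H ≤ K ∧ K.FiniteIndex}, ν ∈ K := by
        intro hall
        exact hνH (by rw [hLERF H hHfg]; exact Subgroup.mem_sInf.mpr hall)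
      push_neg at hν'
      obtain ⟨K, ⟨hK1, hK2⟩, hK3⟩ := hν'
      exact ⟨K, hK1, hK2, fun _ => hK3⟩
    · exact ⟨⊤, le_top, ⟨by simp [Subgroup.index_top]⟩, fun h => absurd h hν⟩
  choose f hf1 hf2 hf3 using hsel
  refine ⟨⨅ ν ∈ N, f ν, ⟨?_, ?_⟩, Subgroup.finiteIndex_iInf' f fun ν _ => hf2 ν⟩
  · intro p hp
    simp only [Subgroup.mem_iInf]
    intro ν _
    exact hf1 ν (Subgroup.subset_closure hp)
  · intro ν hν hmem
    simp only [Subgroup.mem_iInf] at hmem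
    exact hf3 ν hν (hmem ν hν)

end BoomerangAux

open BoomerangAux in
theorem boomerang_residual_of_lerf {Γ : Type*} [Group Γ] [Countable Γ]
    (hLERF : ∀ H : Subgroup Γ, H.FG →
      H = sInf {K : Subgroup Γ | H ≤ K ∧ K.FiniteIndex}) :
    {Δ : Subgroup Γ | IsBoomerang Δ} ∈ @residual (Subgroup Γ) (chabautyTopology Γ) := by
  classical
  letI := chabautyTopology Γ
  have hdense : ∀ (γ : Γ) (P N : Finset Γ), Dense (W γ P N) := by
    intro γ P N
    rw [dense_iff_inter_open]
    rintro O hO ⟨Δ, hΔ⟩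
    obtain ⟨P', N', hΔU, hUO⟩ := exists_basic hO hΔ
    obtain ⟨K, hKU, hKfi⟩ := exists_finiteIndex_mem_U hLERF hΔU
    exact ⟨K, hUO hKU, finiteIndex_mem_W hKfi γ P N⟩
  have hres : (⋂ i : Γ × Finset Γ × Finset Γ, W i.1 i.2.1 i.2.2) ∈ residual (Subgroup Γ) :=
    countable_iInter_mem.mpr fun i =>
      residual_of_dense_open (isOpen_W i.1 i.2.1 i.2.2) (hdense i.1 i.2.1 i.2.2)
  refine Filter.mem_of_superset hres ?_
  intro Δ hΔ γ O hO hΔO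
  obtain ⟨P, N, hΔU, hUO⟩ := exists_basic hO hΔO
  obtain ⟨n, hn, hc⟩ := (Set.mem_iInter.mp hΔ (γ, P, N)) hΔU
  exact ⟨n, hn, hUO hc⟩
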